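/- In an infinitary pretopos C, the full subcategory of C/(X × X) spanned by equivalence relations on X is reflective: the inclusion functor has a left adjoint, sending A ∈ C/(X × X) to the image (monomorphic part of the effective-epi/mono factorization) of the map G_X(A) → X × X, where G_X(A) is the free internal 'zigzag' object ∐_{n≥0} (A ⊔ A^op)^{⊗_X n}. -/

import Mathlib

open CategoryTheory CategoryTheory.Limits

universe v u

variable {C : Type u} [Category.{v} C] [HasFiniteLimits C]

namespace RelTensor

variable (X : C)

/-- The source map of an object of `C/(X × X)`. -/
noncomputable abbrev src (A : Over (X ⨯ X)) : A.left ⟶ X := A.hom ≫ prod.fst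

/-- The target map of an object of `C/(X × X)`. -/
noncomputable abbrev tgt (A : Over (X ⨯ X)) : A.left ⟶ X := A.hom ≫ prod.snd

/-- The composition tensor product `A ⊗_X B = A ×_{d₁, X, d₀} B` on `C/(X × X)`. -/
noncomputable def tens (A B : Over (X ⨯ X)) : Over (X ⨯ X) :=
  Over.mk (prod.lift (pullback.fst (tgt X A) (src X B) ≫ src X A)
    (pullback.snd (tgt X A) (src X B) ≫ tgt X B))

/-- The unit for `⊗_X`: the diagonal `X ⟶ X × X`. -/
noncomputable def unitX : Over (X ⨯ X) := Over.mk (diag X)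

/-- The opposite relation, obtained by swapping the two structure maps. -/
noncomputable def opX : Over (X ⨯ X) ⥤ Over (X ⨯ X) :=
  Over.map (prod.braiding X X).hom

end RelTensor

variable (C)

/-- An equivalence groupoid in `C`: a pair of objects with a monomorphism
`X₁ ⟶ X₀ ⨯ X₀` which is an internal equivalence relation. -/
structure EqGpd where
  X₀ : C
  X₁ : C
  d₀ : X₁ ⟶ X₀
  d₁ : X₁ ⟶ X₀
  mono : Mono (prod.lift d₀ d₁)
  refl : ∀ (T : C) (x : T ⟶ X₀), ∃ h : T ⟶ X₁, h ≫ d₀ = x ∧ h ≫ d₁ = x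
  symm : ∀ (T : C) (x y : T ⟶ X₀), (∃ h : T ⟶ X₁, h ≫ d₀ = x ∧ h ≫ d₁ = y) →
    ∃ h : T ⟶ X₁, h ≫ d₀ = y ∧ h ≫ d₁ = x
  trans : ∀ (T : C) (x y z : T ⟶ X₀),
    (∃ h : T ⟶ X₁, h ≫ d₀ = x ∧ h ≫ d₁ = y) →
    (∃ h : T ⟶ X₁, h ≫ d₀ = y ∧ h ≫ d₁ = z) →
    ∃ h : T ⟶ X₁, h ≫ d₀ = x ∧ h ≫ d₁ = z

namespace EqGpd

variable {C}

/-- A morphism of equivalence groupoids. -/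
@[ext]
structure Hom (A B : EqGpd C) where
  f₀ : A.X₀ ⟶ B.X₀
  f₁ : A.X₁ ⟶ B.X₁
  w₀ : f₁ ≫ B.d₀ = A.d₀ ≫ f₀
  w₁ : f₁ ≫ B.d₁ = A.d₁ ≫ f₀

instance : Category (EqGpd C) where
  Hom A B := Hom A B
  id A := ⟨𝟙 _, 𝟙 _, by simp, by simp⟩
  comp {A B D} f g := ⟨f.f₀ ≫ g.f₀, f.f₁ ≫ g.f₁,
    by rw [Category.assoc, g.w₀, ← Category.assoc, f.w₀, Category.assoc],
    by rw [Category.assoc, g.w₁, ← Category.assoc, f.w₁, Category.assoc]⟩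
  id_comp f := by apply Hom.ext <;> simp
  comp_id f := by apply Hom.ext <;> simp
  assoc f g h := by apply Hom.ext <;> simp

@[simp] lemma comp_f₀ {A B D : EqGpd C} (f : A ⟶ B) (g : B ⟶ D) :
    (f ≫ g).f₀ = f.f₀ ≫ g.f₀ := rfl

@[simp] lemma comp_f₁ {A B D : EqGpd C} (f : A ⟶ B) (g : B ⟶ D) :
    (f ≫ g).f₁ = f.f₁ ≫ g.f₁ := rfl

@[simp] lemma id_f₀ (A : EqGpd C) : (𝟙 A : A ⟶ A).f₀ = 𝟙 A.X₀ := rfl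

@[simp] lemma id_f₁ (A : EqGpd C) : (𝟙 A : A ⟶ A).f₁ = 𝟙 A.X₁ := rfl

/-- The homotopy relation on morphisms of equivalence groupoids. -/
def htpy : HomRel (EqGpd C) := fun {A B} f g =>
  ∃ h : A.X₀ ⟶ B.X₁, h ≫ B.d₀ = f.f₀ ∧ h ≫ B.d₁ = g.f₀

/-- The embedding of `C` into equivalence groupoids via diagonals. -/
def disc : C ⥤ EqGpd C where
  obj X :=
    { X₀ := X
      X₁ := X
      d₀ := 𝟙 X
      d₁ := 𝟙 X
      mono := ⟨fun {Z} g h w => by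
        have := congrArg (fun t => t ≫ (prod.fst : X ⨯ X ⟶ X)) w
        simp only [Category.assoc, prod.lift_fst, Category.comp_id] at this
        exact this⟩
      refl := fun T x => ⟨x, by simp, by simp⟩
      symm := fun T x y ⟨h, h0, h1⟩ => ⟨h, by simpa using h1, by simpa using h0⟩
      trans := fun T x y z ⟨h, h0, h1⟩ ⟨k, k0, k1⟩ =>
        ⟨h, h0, by
          simp only [Category.comp_id] at h0 h1 k0 k1 ⊢
          rw [h1, ← k0]; exact k1⟩ }
  map {X Y} u := ⟨u, u, by simp, by simp⟩
  map_id X := by apply Hom.ext <;> simp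
  map_comp f g := by apply Hom.ext <;> simp

end EqGpd

variable {C}

/-- `f` is an effective epimorphism: it is the coequalizer of its kernel pair. -/
def IsEffectiveEpi {X Y : C} (f : X ⟶ Y) : Prop :=
  ∃ w : pullback.fst f f ≫ f = pullback.snd f f ≫ f,
    Nonempty (IsColimit (Cofork.ofπ f w))

namespace RelTensor

variable (X : C) [HasBinaryCoproducts C] [∀ J : Type v, HasColimitsOfShape (Discrete J) C]

/-- `A ⊔ A^op` in `C/(X × X)`. -/
noncomputable def zig (A : Over (X ⨯ X)) : Over (X ⨯ X) :=
  Over.mk (coprod.desc A.hom ((opX X).obj A).hom)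

/-- Iterated tensor power for `⊗_X`. -/
noncomputable def pow (A : Over (X ⨯ X)) : ℕ → Over (X ⨯ X)
  | 0 => unitX X
  | n + 1 => tens X A (pow A n)

/-- The free `⊗_X`-monoid `G_X(A) = ∐ₙ (A ⊔ A^op)^{⊗_X n}` on `A ⊔ A^op`. -/
noncomputable def GXobj (A : Over (X ⨯ X)) : Over (X ⨯ X) :=
  Over.mk (Sigma.desc fun n : ULift.{v} ℕ => (pow X (zig X A) n.down).hom)

end RelTensor

open RelTensor

/-- An object of `C/(X × X)` is an equivalence relation on `X` if it is a subobject of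
`X × X` which is reflexive, symmetric and transitive. -/
def isEquivRelOver (X : C) (A : Over (X ⨯ X)) : Prop :=
  Mono A.hom ∧
  (∀ (T : C) (x : T ⟶ X), ∃ h : T ⟶ A.left, h ≫ A.hom = prod.lift x x) ∧
  (∀ (T : C) (x y : T ⟶ X), (∃ h : T ⟶ A.left, h ≫ A.hom = prod.lift x y) →
    ∃ h : T ⟶ A.left, h ≫ A.hom = prod.lift y x) ∧
  (∀ (T : C) (x y z : T ⟶ X), (∃ h : T ⟶ A.left, h ≫ A.hom = prod.lift x y) →
    (∃ h : T ⟶ A.left, h ≫ A.hom = prod.lift y z) →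
    ∃ h : T ⟶ A.left, h ≫ A.hom = prod.lift x z)

attribute [local simp] prod.lift_fst prod.lift_snd prod.lift_fst_assoc prod.lift_snd_assoc
  coprod.inl_desc coprod.inr_desc coprod.inl_desc_assoc coprod.inr_desc_assoc
  pullback.lift_fst pullback.lift_snd pullback.lift_fst_assoc pullback.lift_snd_assoc

namespace ReflAux

open RelTensor

variable {C : Type u} [Category.{v} C] [HasFiniteLimits C]

lemma epi_of_eff {Y Z : C} {f : Y ⟶ Z} (h : IsEffectiveEpi f) : Epi f := by
  obtain ⟨w, ⟨hc⟩⟩ := h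
  refine ⟨fun {W} g h' hgh => Cofork.IsColimit.hom_ext hc ?_⟩
  simpa using hgh

lemma descend {T' T Y Q : C} {p : T' ⟶ T} (hp : IsEffectiveEpi p) {m : Q ⟶ Y}
    (hm : Mono m) {f : T ⟶ Y} {k : T' ⟶ Q} (hk : k ≫ m = p ≫ f) :
    ∃ h : T ⟶ Q, h ≫ m = f := by
  obtain ⟨w, ⟨hc⟩⟩ := hp
  have hk2 : pullback.fst p p ≫ k = pullback.snd p p ≫ k := by
    rw [← cancel_mono m, Category.assoc, Category.assoc, hk, ← Category.assoc,
      ← Category.assoc, pullback.condition]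
  refine ⟨Cofork.IsColimit.desc hc k hk2, ?_⟩
  have hq : p ≫ Cofork.IsColimit.desc hc k hk2 = k := by
    simpa using Cofork.IsColimit.π_desc' hc k hk2
  haveI : Epi p := epi_of_eff ⟨w, ⟨hc⟩⟩
  rw [← cancel_epi p, ← Category.assoc, hq, hk]

lemma decompose {ι : Type v} [HasColimitsOfShape (Discrete ι) C]
    (huniv : ∀ {J : Type v} (F : Discrete J ⥤ C) (c : Cocone F),
      IsColimit c → IsUniversalColimit c)
    (Z : ι → C) {T : C} (k : T ⟶ ∐ Z) :
    Nonempty (IsColimit (Cofan.mk T (fun i => (pullback.fst k (Sigma.ι Z i) : _ ⟶ T)))) := by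
  refine huniv (Discrete.functor Z) (colimit.cocone _) (colimit.isColimit _)
    (Cofan.mk T (fun i => (pullback.fst k (Sigma.ι Z i) : _ ⟶ T)))
    (Discrete.natTrans fun i => pullback.snd k (Sigma.ι Z i.as)) k ?_
    (NatTrans.equifibered_of_discrete _) ?_
  · ext ⟨i⟩
    simpa using pullback.condition.symm
  · rintro ⟨i⟩
    exact IsPullback.of_hasPullback k (Sigma.ι Z i)

end ReflAux
namespace ReflAux

open RelTensor

section Elts

variable {C : Type u} [Category.{v} C] [HasFiniteLimits C]

variable [HasBinaryCoproducts C] [∀ J : Type v, HasColimitsOfShape (Discrete J) C]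
variable (X : C) (A : Over (X ⨯ X))

lemma pow_zero_hom : (pow X A 0).hom = diag X := rfl

lemma pow_succ_hom (n : ℕ) :
    (pow X A (n+1)).hom =
      prod.lift (pullback.fst (tgt X A) (src X (pow X A n)) ≫ src X A)
        (pullback.snd (tgt X A) (src X (pow X A n)) ≫ tgt X (pow X A n)) := rfl

lemma GXobj_hom : (GXobj X A).hom
    = Sigma.desc (fun n : ULift.{v} ℕ => (pow X (zig X A) n.down).hom) := rfl

lemma zig_hom : (zig X A).hom = coprod.desc A.hom (A.hom ≫ (prod.braiding X X).hom) := rfl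

variable {X A}

/-- prepend a single edge to a path. -/
lemma elt_cons {n : ℕ} {T : C} {x y z : T ⟶ X}
    {a : T ⟶ (zig X A).left} (ha : a ≫ (zig X A).hom = prod.lift x y)
    {w : T ⟶ (pow X (zig X A) n).left} (hw : w ≫ (pow X (zig X A) n).hom = prod.lift y z) :
    ∃ v : T ⟶ (pow X (zig X A) (n+1)).left,
      v ≫ (pow X (zig X A) (n+1)).hom = prod.lift x z := by
  have hcond : a ≫ tgt X (zig X A) = w ≫ src X (pow X (zig X A) n) := by
    show a ≫ (zig X A).hom ≫ prod.snd = w ≫ (pow X (zig X A) n).hom ≫ prod.fst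
    simp [reassoc_of% ha, reassoc_of% hw]
  refine ⟨pullback.lift a w hcond, ?_⟩
  show pullback.lift a w hcond ≫ prod.lift
    (pullback.fst (tgt X (zig X A)) (src X (pow X (zig X A) n)) ≫ src X (zig X A))
    (pullback.snd (tgt X (zig X A)) (src X (pow X (zig X A) n)) ≫ tgt X (pow X (zig X A) n)) = _
  apply Limits.prod.hom_ext
  · simp [reassoc_of% ha]
  · simp [reassoc_of% hw]

/-- decompose a path of length `n+1` into an edge and a path. -/
lemma elt_uncons {n : ℕ} {T : C} {x z : T ⟶ X}
    {v : T ⟶ (pow X (zig X A) (n+1)).left}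
    (hv : v ≫ (pow X (zig X A) (n+1)).hom = prod.lift x z) :
    ∃ (y : T ⟶ X) (a : T ⟶ (zig X A).left) (w : T ⟶ (pow X (zig X A) n).left),
      a ≫ (zig X A).hom = prod.lift x y ∧ w ≫ (pow X (zig X A) n).hom = prod.lift y z := by
  rw [pow_succ_hom] at hv
  let v' : T ⟶ pullback (tgt X (zig X A)) (src X (pow X (zig X A) n)) := v
  have hv' : v' ≫ prod.lift
      (pullback.fst (tgt X (zig X A)) (src X (pow X (zig X A) n)) ≫ src X (zig X A))
      (pullback.snd (tgt X (zig X A)) (src X (pow X (zig X A) n)) ≫ tgt X (pow X (zig X A) n))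
      = prod.lift x z := hv
  clear_value v'
  have hfst : v' ≫ pullback.fst (tgt X (zig X A)) (src X (pow X (zig X A) n)) ≫
      (zig X A).hom ≫ prod.fst = x := by
    have := congrArg (· ≫ prod.fst) hv'
    simpa using this
  have hsnd : v' ≫ pullback.snd (tgt X (zig X A)) (src X (pow X (zig X A) n)) ≫
      (pow X (zig X A) n).hom ≫ prod.snd = z := by
    have := congrArg (· ≫ prod.snd) hv'
    simpa using this
  refine ⟨v' ≫ pullback.fst _ _ ≫ (zig X A).hom ≫ prod.snd,
    v' ≫ pullback.fst _ _, v' ≫ pullback.snd _ _, ?_, ?_⟩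
  · apply Limits.prod.hom_ext
    · simpa using hfst
    · simp
  · apply Limits.prod.hom_ext
    · have hpc : pullback.fst (tgt X (zig X A)) (src X (pow X (zig X A) n)) ≫
          (zig X A).hom ≫ prod.snd =
          pullback.snd (tgt X (zig X A)) (src X (pow X (zig X A) n)) ≫
          (pow X (zig X A) n).hom ≫ prod.fst := pullback.condition
      rw [hpc]
      simp
    · simpa using hsnd

lemma elt_nil {T : C} {x y : T ⟶ X} {w : T ⟶ (pow X (zig X A) 0).left}
    (hw : w ≫ (pow X (zig X A) 0).hom = prod.lift x y) :
    x = y := by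
  let w' : T ⟶ X := w
  have hw' : w' ≫ prod.lift (𝟙 X) (𝟙 X) = prod.lift x y := hw
  clear_value w'
  have h1 := congrArg (· ≫ prod.fst) hw'
  have h2 := congrArg (· ≫ prod.snd) hw'
  simp only [Category.assoc, prod.lift_fst, prod.lift_snd] at h1 h2
  rw [← h1, ← h2]

/-- the swap involution on `zig`. -/
lemma elt_zswap {T : C} {x y : T ⟶ X} {a : T ⟶ (zig X A).left}
    (ha : a ≫ (zig X A).hom = prod.lift x y) :
    ∃ b : T ⟶ (zig X A).left, b ≫ (zig X A).hom = prod.lift y x := by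
  obtain ⟨s, hsw⟩ : ∃ s : (zig X A).left ⟶ (zig X A).left, s ≫
      (zig X A).hom = (zig X A).hom ≫ (prod.braiding X X).hom := ⟨coprod.desc coprod.inr coprod.inl, by
    show (coprod.desc coprod.inr coprod.inl : A.left ⨿ A.left ⟶ A.left ⨿ A.left) ≫
      coprod.desc A.hom (A.hom ≫ (prod.braiding X X).hom) =
      coprod.desc A.hom (A.hom ≫ (prod.braiding X X).hom) ≫ (prod.braiding X X).hom
    apply coprod.hom_ext
    · rw [coprod.inl_desc_assoc, coprod.inl_desc_assoc, coprod.inr_desc]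
    · rw [coprod.inr_desc_assoc, coprod.inr_desc_assoc, coprod.inl_desc]
      apply Limits.prod.hom_ext <;> simp⟩
  refine ⟨a ≫ s, ?_⟩
  rw [Category.assoc, hsw, reassoc_of% ha]
  apply Limits.prod.hom_ext <;> simp

/-- append a single edge to a path. -/
lemma elt_snoc : ∀ (n : ℕ) {T : C} {x y z : T ⟶ X}
    (w : T ⟶ (pow X (zig X A) n).left) (hw : w ≫ (pow X (zig X A) n).hom = prod.lift x y)
    (a : T ⟶ (zig X A).left) (ha : a ≫ (zig X A).hom = prod.lift y z),
    ∃ v : T ⟶ (pow X (zig X A) (n+1)).left,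
      v ≫ (pow X (zig X A) (n+1)).hom = prod.lift x z := by
  intro n
  induction n with
  | zero =>
    intro T x y z w hw a ha
    have hxy := elt_nil hw
    have hz : (z : T ⟶ X) ≫ (pow X (zig X A) 0).hom = prod.lift z z := by
      rw [pow_zero_hom]; apply Limits.prod.hom_ext <;> simp
    exact elt_cons (by rw [ha, ← hxy]) hz
  | succ n ih =>
    intro T x y z w hw a ha
    obtain ⟨u, a₀, w₀, ha₀, hw₀⟩ := elt_uncons hw
    obtain ⟨v, hv⟩ := ih w₀ hw₀ a ha
    exact elt_cons ha₀ hv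

/-- reverse a path. -/
lemma elt_rev : ∀ (n : ℕ) {T : C} {x y : T ⟶ X}
    (w : T ⟶ (pow X (zig X A) n).left) (hw : w ≫ (pow X (zig X A) n).hom = prod.lift x y),
    ∃ (k : ℕ) (v : T ⟶ (pow X (zig X A) k).left),
      v ≫ (pow X (zig X A) k).hom = prod.lift y x := by
  intro n
  induction n with
  | zero =>
    intro T x y w hw
    exact ⟨0, w, by rw [hw, elt_nil hw]⟩
  | succ n ih =>
    intro T x y w hw
    obtain ⟨u, a, w₀, ha, hw₀⟩ := elt_uncons hw
    obtain ⟨k, v, hv⟩ := ih w₀ hw₀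
    obtain ⟨b, hb⟩ := elt_zswap ha
    obtain ⟨v', hv'⟩ := elt_snoc k v hv b hb
    exact ⟨k + 1, v', hv'⟩

/-- concatenate paths. -/
lemma elt_concat : ∀ (m : ℕ) {T : C} (n : ℕ) {x y z : T ⟶ X}
    (w : T ⟶ (pow X (zig X A) n).left) (hw : w ≫ (pow X (zig X A) n).hom = prod.lift x y)
    (v : T ⟶ (pow X (zig X A) m).left) (hv : v ≫ (pow X (zig X A) m).hom = prod.lift y z),
    ∃ (k : ℕ) (u : T ⟶ (pow X (zig X A) k).left),
      u ≫ (pow X (zig X A) k).hom = prod.lift x z := by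
  intro m
  induction m with
  | zero =>
    intro T n x y z w hw v hv
    exact ⟨n, w, by rw [hw, elt_nil hv]⟩
  | succ m ih =>
    intro T n x y z w hw v hv
    obtain ⟨u, a, v₀, ha, hv₀⟩ := elt_uncons hv
    obtain ⟨w', hw'⟩ := elt_snoc n w hw a ha
    exact ih (n+1) w' hw' v₀ hv₀

end Elts

end ReflAux
namespace ReflAux

open RelTensor

section Main

variable {C : Type u} [Category.{v} C] [HasFiniteLimits C]

/-- The kernel pair of a morphism, as an equivalence groupoid. -/
noncomputable abbrev kernelPairGpd {Y Z : C} (f : Y ⟶ Z) : EqGpd C where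
  X₀ := Y
  X₁ := pullback f f
  d₀ := pullback.fst f f
  d₁ := pullback.snd f f
  mono := ⟨fun {T} g h w => by
    apply pullback.hom_ext
    · simpa using congrArg (· ≫ (prod.fst : Y ⨯ Y ⟶ Y)) w
    · simpa using congrArg (· ≫ (prod.snd : Y ⨯ Y ⟶ Y)) w⟩
  refl := fun T x => ⟨pullback.lift x x rfl, by simp, by simp⟩
  symm := fun T x y ⟨h, h0, h1⟩ =>
    ⟨pullback.lift y x (by
      rw [← h0, ← h1, Category.assoc, Category.assoc, pullback.condition]),
      by simp, by simp⟩
  trans := fun T x y z ⟨h, h0, h1⟩ ⟨k, k0, k1⟩ =>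
    ⟨pullback.lift x z (by
      have e1 : x ≫ f = y ≫ f := by
        rw [← h0, ← h1, Category.assoc, Category.assoc, pullback.condition]
      have e2 : y ≫ f = z ≫ f := by
        rw [← k0, ← k1, Category.assoc, Category.assoc, pullback.condition]
      rw [e1, e2]), by simp, by simp⟩

lemma over_hom_subsingleton {Y : C} {B : Over Y} (hB : Mono B.hom) (A : Over Y) :
    Subsingleton (A ⟶ B) := by
  constructor
  intro f g
  ext
  rw [← cancel_mono B.hom, Over.w f, Over.w g]

variable [∀ J : Type v, HasColimitsOfShape (Discrete J) C] [HasBinaryCoproducts C]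

theorem main_aux
    (huniv : ∀ {J : Type v} (F : Discrete J ⥤ C) (c : Cocone F),
      IsColimit c → IsUniversalColimit c)
    (heff : ∀ A : EqGpd C, ∃ (Q : C) (q : A.X₀ ⟶ Q) (w : A.d₀ ≫ q = A.d₁ ≫ q),
      Nonempty (IsColimit (Cofork.ofπ q w)) ∧ IsIso (pullback.lift A.d₀ A.d₁ w))
    (hstab : ∀ {X Y Z : C} (f : X ⟶ Y) (g : Z ⟶ Y),
      IsEffectiveEpi f → IsEffectiveEpi (pullback.snd f g))
    (X : C) (A : Over (X ⨯ X)) :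
    ∃ (Q : C) (q : (GXobj X A).left ⟶ Q) (mq : Q ⟶ X ⨯ X),
      IsEffectiveEpi q ∧ Mono mq ∧ q ≫ mq = (GXobj X A).hom ∧
      isEquivRelOver X (Over.mk mq) ∧
      (∀ B : Over (X ⨯ X), isEquivRelOver X B → (A ⟶ B) →
        ∃ r : Q ⟶ B.left, r ≫ B.hom = mq) ∧
      (∃ η : A.left ⟶ Q, η ≫ mq = A.hom) := by
  classical
  obtain ⟨Q, q, w0, ⟨hc0⟩, hiso0⟩ : ∃ (Q : C) (q : (GXobj X A).left ⟶ Q)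
      (w : pullback.fst (GXobj X A).hom (GXobj X A).hom ≫ q
        = pullback.snd (GXobj X A).hom (GXobj X A).hom ≫ q),
      Nonempty (IsColimit (Cofork.ofπ q w)) ∧
        IsIso (pullback.lift (pullback.fst (GXobj X A).hom (GXobj X A).hom)
          (pullback.snd (GXobj X A).hom (GXobj X A).hom) w) :=
    heff (kernelPairGpd (GXobj X A).hom)
  have w' : pullback.fst (GXobj X A).hom (GXobj X A).hom ≫ q
      = pullback.snd (GXobj X A).hom (GXobj X A).hom ≫ q := w0
  have hc : IsColimit (Cofork.ofπ q w') := hc0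
  -- the mono part
  have hcond : pullback.fst (GXobj X A).hom (GXobj X A).hom ≫ (GXobj X A).hom = pullback.snd (GXobj X A).hom (GXobj X A).hom ≫ (GXobj X A).hom := pullback.condition
  set mq := Cofork.IsColimit.desc hc (GXobj X A).hom hcond with hmq
  have hqm : q ≫ mq = (GXobj X A).hom := by simpa using Cofork.IsColimit.π_desc' hc (GXobj X A).hom hcond
  haveI hepi : Epi q := ⟨fun g h hgh => Cofork.IsColimit.hom_ext hc (by simpa using hgh)⟩
  -- q is an effective epimorphism
  have hiso : IsIso (pullback.lift (pullback.fst (GXobj X A).hom (GXobj X A).hom) (pullback.snd (GXobj X A).hom (GXobj X A).hom) w' :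
      pullback (GXobj X A).hom (GXobj X A).hom ⟶ pullback q q) := hiso0
  set φ : pullback (GXobj X A).hom (GXobj X A).hom ⟶ pullback q q :=
    pullback.lift (pullback.fst (GXobj X A).hom (GXobj X A).hom) (pullback.snd (GXobj X A).hom (GXobj X A).hom) w' with hφ
  haveI : IsIso φ := hiso
  have hw2 : pullback.fst q q ≫ q = pullback.snd q q ≫ q := by
    rw [← cancel_epi φ, ← Category.assoc, ← Category.assoc, hφ,
      pullback.lift_fst, pullback.lift_snd, w']
  have hqe : IsEffectiveEpi q := by
    refine ⟨hw2, ⟨Cofork.IsColimit.mk' _ (fun s => ?_)⟩⟩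
    have hs : pullback.fst (GXobj X A).hom (GXobj X A).hom ≫ s.π = pullback.snd (GXobj X A).hom (GXobj X A).hom ≫ s.π := by
      have h1 : pullback.fst (GXobj X A).hom (GXobj X A).hom ≫ s.π = φ ≫ pullback.fst q q ≫ s.π := by
        rw [← Category.assoc, hφ, pullback.lift_fst]
      have h2 : pullback.snd (GXobj X A).hom (GXobj X A).hom ≫ s.π = φ ≫ pullback.snd q q ≫ s.π := by
        rw [← Category.assoc, hφ, pullback.lift_snd]
      rw [h1, h2, s.condition]
    refine ⟨Cofork.IsColimit.desc hc s.π hs, ?_, ?_⟩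
    · simpa using Cofork.IsColimit.π_desc' hc s.π hs
    · intro mm hmm
      have hqmm : q ≫ mm = s.π := by simpa using hmm
      apply Cofork.IsColimit.hom_ext hc
      simp only [Cofork.π_ofπ]
      rw [hqmm]
      exact (by simpa using Cofork.IsColimit.π_desc' hc s.π hs :
        q ≫ Cofork.IsColimit.desc hc s.π hs = s.π).symm
  -- mq is a monomorphism
  have hm : Mono mq := by
    constructor
    intro T a b hab
    have hq1 : IsEffectiveEpi (pullback.snd q a) := hstab q a hqe
    set p₁ := pullback.snd q a with hp₁
    have hq2 : IsEffectiveEpi (pullback.snd q (p₁ ≫ b)) := hstab q (p₁ ≫ b) hqe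
    set p₂ := pullback.snd q (p₁ ≫ b) with hp₂
    have hk1 : pullback.fst q a ≫ q = p₁ ≫ a := pullback.condition
    have hk2 : pullback.fst q (p₁ ≫ b) ≫ q = p₂ ≫ p₁ ≫ b := pullback.condition
    have hff : (p₂ ≫ pullback.fst q a) ≫ (GXobj X A).hom = pullback.fst q (p₁ ≫ b) ≫ (GXobj X A).hom := by
      rw [← hqm]
      calc (p₂ ≫ pullback.fst q a) ≫ q ≫ mq
          = p₂ ≫ (pullback.fst q a ≫ q) ≫ mq := by simp only [Category.assoc]
        _ = p₂ ≫ p₁ ≫ a ≫ mq := by rw [hk1]; simp only [Category.assoc]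
        _ = p₂ ≫ p₁ ≫ b ≫ mq := by rw [hab]
        _ = (pullback.fst q (p₁ ≫ b) ≫ q) ≫ mq := by rw [hk2]; simp only [Category.assoc]
        _ = pullback.fst q (p₁ ≫ b) ≫ q ≫ mq := by simp only [Category.assoc]
    have hj : (p₂ ≫ pullback.fst q a) ≫ q = pullback.fst q (p₁ ≫ b) ≫ q := by
      have h1 := pullback.lift_fst _ _ hff
      have h2 := pullback.lift_snd _ _ hff
      calc (p₂ ≫ pullback.fst q a) ≫ q
          = (pullback.lift _ _ hff ≫ pullback.fst (GXobj X A).hom (GXobj X A).hom) ≫ q := by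
            rw [h1]
        _ = (pullback.lift _ _ hff ≫ pullback.snd (GXobj X A).hom (GXobj X A).hom) ≫ q := by
            rw [Category.assoc, Category.assoc, w']
        _ = pullback.fst q (p₁ ≫ b) ≫ q := by rw [h2]
    have hcan : p₂ ≫ p₁ ≫ a = p₂ ≫ p₁ ≫ b := by
      have e1 : (p₂ ≫ pullback.fst q a) ≫ q = p₂ ≫ p₁ ≫ a := by
        rw [Category.assoc, hk1]
      rw [← e1, hj, hk2]
    haveI : Epi p₂ := epi_of_eff hq2
    haveI : Epi p₁ := epi_of_eff hq1
    rwa [cancel_epi p₂, cancel_epi p₁] at hcan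
  -- sending paths into Q
  have hι : ∀ i : ULift.{v} ℕ,
      Sigma.ι (fun n : ULift.{v} ℕ => (pow X (zig X A) n.down).left) i ≫ (GXobj X A).hom
        = (pow X (zig X A) i.down).hom := by
    intro i
    rw [GXobj_hom]
    simp
  have toQ : ∀ {T : C} (n : ℕ) (g : T ⟶ (pow X (zig X A) n).left) (u : T ⟶ X ⨯ X),
      g ≫ (pow X (zig X A) n).hom = u → ∃ h : T ⟶ Q, h ≫ mq = u := by
    intro T n g u hg
    let q' : (∐ fun n : ULift.{v} ℕ => (pow X (zig X A) n.down).left) ⟶ Q := q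
    have hq' : q' ≫ mq = Sigma.desc (fun n : ULift.{v} ℕ => (pow X (zig X A) n.down).hom) := hqm
    clear_value q'
    refine ⟨g ≫ Sigma.ι (fun n : ULift.{v} ℕ => (pow X (zig X A) n.down).left)
      (ULift.up n) ≫ q', ?_⟩
    rw [Category.assoc, Category.assoc, hq', Sigma.ι_desc, hg]
  -- glueing maps to Q along the coproduct decomposition of a cover
  have pieceGlue : ∀ {T : C} (k : T ⟶ (GXobj X A).left) (u : T ⟶ X ⨯ X),
      (∀ (n : ℕ) (S : C) (inc : S ⟶ T) (a : S ⟶ (pow X (zig X A) n).left),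
        a ≫ (pow X (zig X A) n).hom = inc ≫ k ≫ (GXobj X A).hom →
        ∃ g : S ⟶ Q, g ≫ mq = inc ≫ u) →
      ∃ g : T ⟶ Q, g ≫ mq = u := by
    intro T k u hloc
    let k' : T ⟶ ∐ (fun n : ULift.{v} ℕ => (pow X (zig X A) n.down).left) := k
    have hk' : k' ≫ Sigma.desc (fun n : ULift.{v} ℕ => (pow X (zig X A) n.down).hom)
        = k ≫ (GXobj X A).hom := rfl
    clear_value k'
    obtain ⟨hcol⟩ := decompose huniv (fun n : ULift.{v} ℕ => (pow X (zig X A) n.down).left) k'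
    have piece : ∀ i : ULift.{v} ℕ, ∃ g :
        (pullback k' (Sigma.ι (fun n : ULift.{v} ℕ => (pow X (zig X A) n.down).left) i) : C) ⟶ Q,
        g ≫ mq = pullback.fst k'
          (Sigma.ι (fun n : ULift.{v} ℕ => (pow X (zig X A) n.down).left) i) ≫ u := by
      intro i
      apply hloc i.down _
        (pullback.fst k' (Sigma.ι (fun n : ULift.{v} ℕ => (pow X (zig X A) n.down).left) i))
        (pullback.snd k' (Sigma.ι (fun n : ULift.{v} ℕ => (pow X (zig X A) n.down).left) i))
      rw [← hk', ← Category.assoc, pullback.condition, Category.assoc, Sigma.ι_desc]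
    choose g hg using piece
    refine ⟨hcol.desc (Cofan.mk Q g), ?_⟩
    apply hcol.hom_ext
    rintro ⟨i⟩
    have hfac := hcol.fac (Cofan.mk Q g) ⟨i⟩
    simp only [Cofan.mk_ι_app] at hfac ⊢
    rw [← Category.assoc, hfac, hg]
  -- the image is an equivalence relation
  have hrefl : ∀ (T : C) (x : T ⟶ X), ∃ h : T ⟶ Q, h ≫ mq = prod.lift x x := by
    intro T x
    refine toQ 0 x (prod.lift x x) ?_
    exact (by apply Limits.prod.hom_ext <;> simp :
      x ≫ prod.lift (𝟙 X) (𝟙 X) = prod.lift x x)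
  have hsymm : ∀ (T : C) (x y : T ⟶ X), (∃ h : T ⟶ Q, h ≫ mq = prod.lift x y) →
      ∃ h : T ⟶ Q, h ≫ mq = prod.lift y x := by
    rintro T x y ⟨h, hh⟩
    have hcov : IsEffectiveEpi (pullback.snd q h) := hstab q h hqe
    have hkf : pullback.fst q h ≫ (GXobj X A).hom = pullback.snd q h ≫ prod.lift x y := by
      rw [← hqm, ← Category.assoc, pullback.condition, Category.assoc, hh]
    have hglue : ∃ g : (pullback q h : C) ⟶ Q,
        g ≫ mq = pullback.snd q h ≫ prod.lift y x := by
      apply pieceGlue (pullback.fst q h) (pullback.snd q h ≫ prod.lift y x)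
      intro n S inc a ha
      rw [hkf] at ha
      have ha' : a ≫ (pow X (zig X A) n).hom =
          prod.lift (inc ≫ pullback.snd q h ≫ x) (inc ≫ pullback.snd q h ≫ y) := by
        rw [ha]; apply Limits.prod.hom_ext <;> simp
      obtain ⟨kk, v, hv⟩ := elt_rev n a ha'
      obtain ⟨g, hg⟩ := toQ kk v _ hv
      refine ⟨g, ?_⟩
      rw [hg]; apply Limits.prod.hom_ext <;> simp
    obtain ⟨g, hg⟩ := hglue
    exact descend hcov hm hg
  have htrans : ∀ (T : C) (x y z : T ⟶ X), (∃ h : T ⟶ Q, h ≫ mq = prod.lift x y) →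
      (∃ h : T ⟶ Q, h ≫ mq = prod.lift y z) →
      ∃ h : T ⟶ Q, h ≫ mq = prod.lift x z := by
    rintro T x y z ⟨h₁, hh₁⟩ ⟨h₂, hh₂⟩
    have hcov₁ : IsEffectiveEpi (pullback.snd q h₁) := hstab q h₁ hqe
    have hcov₂ : IsEffectiveEpi (pullback.snd q (pullback.snd q h₁ ≫ h₂)) :=
      hstab q (pullback.snd q h₁ ≫ h₂) hqe
    have hkf₁ : pullback.fst q h₁ ≫ (GXobj X A).hom
        = pullback.snd q h₁ ≫ prod.lift x y := by
      rw [← hqm, ← Category.assoc, pullback.condition, Category.assoc, hh₁]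
    have hkf₂ : pullback.fst q (pullback.snd q h₁ ≫ h₂) ≫ (GXobj X A).hom
        = pullback.snd q (pullback.snd q h₁ ≫ h₂) ≫ pullback.snd q h₁ ≫ prod.lift y z := by
      rw [← hqm, ← Category.assoc, pullback.condition]
      simp only [Category.assoc]
      rw [hh₂]
    have main : ∃ g : (pullback q (pullback.snd q h₁ ≫ h₂) : C) ⟶ Q,
        g ≫ mq = pullback.snd q (pullback.snd q h₁ ≫ h₂) ≫ pullback.snd q h₁ ≫
          prod.lift x z := by
      apply pieceGlue (pullback.snd q (pullback.snd q h₁ ≫ h₂) ≫ pullback.fst q h₁)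
      intro n S inc a ha
      simp only [Category.assoc] at ha
      rw [hkf₁] at ha
      have ha' : a ≫ (pow X (zig X A) n).hom =
          prod.lift (inc ≫ pullback.snd q (pullback.snd q h₁ ≫ h₂) ≫ pullback.snd q h₁ ≫ x)
            (inc ≫ pullback.snd q (pullback.snd q h₁ ≫ h₂) ≫ pullback.snd q h₁ ≫ y) := by
        rw [ha]; apply Limits.prod.hom_ext <;> simp
      apply pieceGlue (inc ≫ pullback.fst q (pullback.snd q h₁ ≫ h₂))
      intro n₂ S₂ inc₂ b hb
      simp only [Category.assoc] at hb
      rw [hkf₂] at hb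
      have hb' : b ≫ (pow X (zig X A) n₂).hom =
          prod.lift (inc₂ ≫ inc ≫ pullback.snd q (pullback.snd q h₁ ≫ h₂) ≫
              pullback.snd q h₁ ≫ y)
            (inc₂ ≫ inc ≫ pullback.snd q (pullback.snd q h₁ ≫ h₂) ≫
              pullback.snd q h₁ ≫ z) := by
        rw [hb]; apply Limits.prod.hom_ext <;> simp
      have ha'' : (inc₂ ≫ a) ≫ (pow X (zig X A) n).hom =
          prod.lift (inc₂ ≫ inc ≫ pullback.snd q (pullback.snd q h₁ ≫ h₂) ≫
              pullback.snd q h₁ ≫ x)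
            (inc₂ ≫ inc ≫ pullback.snd q (pullback.snd q h₁ ≫ h₂) ≫
              pullback.snd q h₁ ≫ y) := by
        rw [Category.assoc, ha']; apply Limits.prod.hom_ext <;> simp
      obtain ⟨kk, uu, huu⟩ := elt_concat n₂ n (inc₂ ≫ a) ha'' b hb'
      obtain ⟨g, hg⟩ := toQ kk uu _ huu
      refine ⟨g, ?_⟩
      rw [hg]; apply Limits.prod.hom_ext <;> simp
    obtain ⟨g, hg⟩ := main
    obtain ⟨g₁, hg₁⟩ := descend hcov₂ hm hg
    exact descend hcov₁ hm hg₁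
  have hrel : isEquivRelOver X (Over.mk mq) := ⟨hm, hrefl, hsymm, htrans⟩
  -- universal property
  have hfac : ∀ B : Over (X ⨯ X), isEquivRelOver X B → (A ⟶ B) →
      ∃ r : Q ⟶ B.left, r ≫ B.hom = mq := by
    intro B hB t
    obtain ⟨hBm, hBr, hBs, hBt⟩ := hB
    have hAhom : A.hom = prod.lift (A.hom ≫ prod.fst) (A.hom ≫ prod.snd) := by
      apply Limits.prod.hom_ext <;> simp
    obtain ⟨vz, hvz⟩ : ∃ vz : (zig X A).left ⟶ B.left, vz ≫ B.hom = (zig X A).hom := by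
      obtain ⟨h', hh'⟩ := hBs A.left (A.hom ≫ prod.fst) (A.hom ≫ prod.snd)
        ⟨t.left, by rw [Over.w t]; exact hAhom⟩
      refine ⟨coprod.desc t.left h', ?_⟩
      show coprod.desc t.left h' ≫ B.hom = coprod.desc A.hom (A.hom ≫ (prod.braiding X X).hom)
      apply coprod.hom_ext
      · rw [coprod.inl_desc_assoc, coprod.inl_desc, Over.w t]
      · rw [coprod.inr_desc_assoc, coprod.inr_desc, hh']
        apply Limits.prod.hom_ext <;> simp
    have hv : ∀ n : ℕ, ∃ v : (pow X (zig X A) n).left ⟶ B.left,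
        v ≫ B.hom = (pow X (zig X A) n).hom := by
      intro n
      induction n with
      | zero =>
        obtain ⟨h, hh⟩ := hBr X (𝟙 X)
        refine ⟨h, ?_⟩
        show h ≫ B.hom = _
        rw [hh, pow_zero_hom]
      | succ n ih =>
        obtain ⟨vn, hvn⟩ := ih
        obtain ⟨h, hh⟩ := hBt (pullback (tgt X (zig X A)) (src X (pow X (zig X A) n)))
          (pullback.fst (tgt X (zig X A)) (src X (pow X (zig X A) n)) ≫ src X (zig X A))
          (pullback.fst (tgt X (zig X A)) (src X (pow X (zig X A) n)) ≫ tgt X (zig X A))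
          (pullback.snd (tgt X (zig X A)) (src X (pow X (zig X A) n)) ≫
            tgt X (pow X (zig X A) n))
          ⟨pullback.fst _ _ ≫ vz, by
            rw [Category.assoc, hvz]
            apply Limits.prod.hom_ext
            · rw [Category.assoc, prod.lift_fst]
            · rw [Category.assoc, prod.lift_snd]⟩
          ⟨pullback.snd _ _ ≫ vn, by
            rw [Category.assoc, hvn]
            apply Limits.prod.hom_ext
            · rw [Category.assoc, prod.lift_fst]
              exact pullback.condition.symm
            · rw [Category.assoc, prod.lift_snd]⟩
        refine ⟨h, ?_⟩
        rw [pow_succ_hom]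
        exact hh
    choose vfun hvfun using hv
    have hdesc : (Sigma.desc (fun i : ULift.{v} ℕ => vfun i.down) :
        (GXobj X A).left ⟶ B.left) ≫ B.hom = (GXobj X A).hom := by
      rw [GXobj_hom]
      apply Sigma.hom_ext
      intro i
      simp [hvfun]
    let D : (GXobj X A).left ⟶ B.left := Sigma.desc (fun i : ULift.{v} ℕ => vfun i.down)
    have hdesc' : D ≫ B.hom = (GXobj X A).hom := hdesc
    clear_value D
    have hcoeq : pullback.fst (GXobj X A).hom (GXobj X A).hom ≫ D
        = pullback.snd (GXobj X A).hom (GXobj X A).hom ≫ D := by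
      rw [← cancel_mono B.hom]
      simp only [Category.assoc]
      rw [hdesc', pullback.condition]
    refine ⟨Cofork.IsColimit.desc hc _ hcoeq, ?_⟩
    rw [← cancel_epi q, ← Category.assoc]
    have hqd : q ≫ Cofork.IsColimit.desc hc _ hcoeq = D := by
      simpa using Cofork.IsColimit.π_desc' hc _ hcoeq
    rw [hqd, hdesc', hqm]
  -- the unit
  have hunit : ∃ η : A.left ⟶ Q, η ≫ mq = A.hom := by
    set dx : A.left ⟶ X := A.hom ≫ prod.fst with hdx
    set dy : A.left ⟶ X := A.hom ≫ prod.snd with hdy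
    have hinl : (coprod.inl : A.left ⟶ (zig X A).left) ≫ (zig X A).hom
        = prod.lift dx dy := by
      show coprod.inl ≫ coprod.desc A.hom (A.hom ≫ (prod.braiding X X).hom) = _
      rw [coprod.inl_desc, hdx, hdy]
      apply Limits.prod.hom_ext <;> simp
    have hd : dy ≫ (pow X (zig X A) 0).hom = prod.lift dy dy :=
      (by apply Limits.prod.hom_ext <;> simp :
        dy ≫ prod.lift (𝟙 X) (𝟙 X) = _)
    obtain ⟨v, hv⟩ := elt_cons (n := 0) hinl hd
    obtain ⟨η, hη⟩ := toQ 1 v _ hv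
    refine ⟨η, ?_⟩
    rw [hη, hdx, hdy]
    apply Limits.prod.hom_ext <;> simp
  exact ⟨Q, q, mq, hqe, hm, hqm, hrel, hfac, hunit⟩

end Main

end ReflAux
/-- in an infinitary pretopos, the full subcategory of `C/(X × X)`
spanned by equivalence relations on `X` is reflective, the reflection of `A` being the
image (effective-epi/mono factorization) of `G_X(A) ⟶ X × X`. -/
theorem equivalence_relations_reflective
    [∀ J : Type v, HasColimitsOfShape (Discrete J) C] [HasBinaryCoproducts C]
    (hdisj : Nonempty (BinaryCoproductsDisjoint C))
    (huniv : ∀ {J : Type v} (F : Discrete J ⥤ C) (c : Cocone F),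
      IsColimit c → IsUniversalColimit c)
    (heff : ∀ A : EqGpd C, ∃ (Q : C) (q : A.X₀ ⟶ Q) (w : A.d₀ ≫ q = A.d₁ ≫ q),
      Nonempty (IsColimit (Cofork.ofπ q w)) ∧ IsIso (pullback.lift A.d₀ A.d₁ w))
    (hstab : ∀ {X Y Z : C} (f : X ⟶ Y) (g : Z ⟶ Y),
      IsEffectiveEpi f → IsEffectiveEpi (pullback.snd f g))
    (X : C) :
    ∃ (L : Over (X ⨯ X) ⥤ ObjectProperty.FullSubcategory (isEquivRelOver X))
      (_ : L ⊣ ObjectProperty.ι (isEquivRelOver X)),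
      ∀ A : Over (X ⨯ X), ∃ e : (GXobj X A).left ⟶ (L.obj A).obj.left,
        IsEffectiveEpi e ∧ Mono (L.obj A).obj.hom ∧
        e ≫ (L.obj A).obj.hom = (GXobj X A).hom := by
  classical
  choose Q q mq hqe hm hqm hrel hfac hunit using
    fun A : Over (X ⨯ X) => ReflAux.main_aux huniv heff hstab X A
  let Fobj : Over (X ⨯ X) → ObjectProperty.FullSubcategory (isEquivRelOver X) :=
    fun A => ⟨Over.mk (mq A), hrel A⟩
  have hsub : ∀ (A : Over (X ⨯ X)) (B : ObjectProperty.FullSubcategory (isEquivRelOver X)),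
      Subsingleton (A ⟶ (ObjectProperty.ι (isEquivRelOver X)).obj B) :=
    fun A B => ReflAux.over_hom_subsingleton B.property.1 A
  have hsub' : ∀ (A : Over (X ⨯ X)) (B : ObjectProperty.FullSubcategory (isEquivRelOver X)),
      Subsingleton (Fobj A ⟶ B) :=
    fun A B => ⟨fun f g => ObjectProperty.hom_ext _
        ((ReflAux.over_hom_subsingleton B.property.1 (Over.mk (mq A))).elim _ _)⟩
  let e : ∀ (A : Over (X ⨯ X)) (B : ObjectProperty.FullSubcategory (isEquivRelOver X)),
      (Fobj A ⟶ B) ≃ (A ⟶ (ObjectProperty.ι (isEquivRelOver X)).obj B) :=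
    fun A B =>
      { toFun := fun g => (Over.homMk (hunit A).choose (hunit A).choose_spec :
            A ⟶ Over.mk (mq A)) ≫ g.hom
        invFun := fun t =>
          ObjectProperty.homMk (Over.homMk (hfac A B.obj B.property t).choose
            (hfac A B.obj B.property t).choose_spec : Over.mk (mq A) ⟶ B.obj)
        left_inv := fun g => (hsub' A B).elim _ g
        right_inv := fun t => (hsub A B).elim _ t }
  have he : ∀ (A : Over (X ⨯ X)) (B B' : ObjectProperty.FullSubcategory (isEquivRelOver X))
      (g : B ⟶ B') (h : Fobj A ⟶ B),
      e A B' (h ≫ g) = e A B h ≫ (ObjectProperty.ι (isEquivRelOver X)).map g :=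
    fun A B B' g h => (hsub A B').elim _ _
  refine ⟨Adjunction.leftAdjointOfEquiv e he, Adjunction.adjunctionOfEquivLeft e he, ?_⟩
  intro A
  exact ⟨q A, hqe A, hm A, hqm A⟩
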